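/- Let a, b > 0. There is no nonzero pair of polynomial functions ξ(t,x) = (1/2)c₁x² + c₁t⁴/b - 2c₁a²t²/b - (2b²+9)c₁t²/18 + c₂t/3 + c₃ and η(t,x) = -(2b/3)c₁x² + (c₁(t³-a²t)/b - (2b²+9)c₁t/9 + c₂/3)x with (c₁,c₂,c₃) ≠ (0,0,0) such that the polynomial identity ξ(a²-3t²)x + 2η(t³-a²t-x) + ηx + ∂²η/∂t²·x³ + (∂η/∂x - 2∂ξ/∂t)(t³-a²t-x)x + b·∂η/∂t·x² = 0 holds identically in (t,x) ∈ ℝ². -/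

import Mathlib

private lemma dq (A B C D E t : ℝ) :
    deriv (fun s : ℝ => A + B * s ^ 1 + C * s ^ 2 + D * s ^ 3 + E * s ^ 4) t
      = B + 2 * C * t + 3 * D * t ^ 2 + 4 * E * t ^ 3 := by
  have h0 := ((((hasDerivAt_const t A).add ((hasDerivAt_pow 1 t).const_mul B)).add
    ((hasDerivAt_pow 2 t).const_mul C)).add ((hasDerivAt_pow 3 t).const_mul D)).add
    ((hasDerivAt_pow 4 t).const_mul E)
  exact h0.deriv.trans (by push_cast; ring)

theorem stmt_15 (a b : ℝ) (ha : 0 < a) (hb : 0 < b) :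
    ¬ ∃ (c₁ c₂ c₃ : ℝ) (ξ η : ℝ → ℝ → ℝ),
      (∀ t x : ℝ, ξ t x = (1 / 2) * c₁ * x ^ 2 + c₁ * t ^ 4 / b
        - 2 * c₁ * a ^ 2 * t ^ 2 / b - (2 * b ^ 2 + 9) * c₁ * t ^ 2 / 18
        + c₂ * t / 3 + c₃) ∧
      (∀ t x : ℝ, η t x = -(2 * b / 3) * c₁ * x ^ 2
        + (c₁ * (t ^ 3 - a ^ 2 * t) / b - (2 * b ^ 2 + 9) * c₁ * t / 9 + c₂ / 3) * x) ∧
      (c₁, c₂, c₃) ≠ (0, 0, 0) ∧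
      (∀ t x : ℝ,
        ξ t x * (a ^ 2 - 3 * t ^ 2) * x
          + 2 * η t x * (t ^ 3 - a ^ 2 * t - x)
          + η t x * x
          + deriv (fun s => deriv (fun r => η r x) s) t * x ^ 3
          + (deriv (fun y => η t y) x - 2 * deriv (fun s => ξ s x) t)
              * (t ^ 3 - a ^ 2 * t - x) * x
          + b * deriv (fun s => η s x) t * x ^ 2 = 0) := by
  rintro ⟨c₁, c₂, c₃, ξ, η, hξ, hη, hne, heq⟩
  have hb' : b ≠ 0 := ne_of_gt hb
  have ha' : a ≠ 0 := ne_of_gt ha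
  -- derivative computations
  have hdξ : ∀ t x : ℝ, deriv (fun s => ξ s x) t
      = 4 * c₁ * t ^ 3 / b - 4 * c₁ * a ^ 2 * t / b - (2 * b ^ 2 + 9) * c₁ * t / 9 + c₂ / 3 := by
    intro t x
    have e : (fun s => ξ s x) = fun s : ℝ =>
        ((1 / 2) * c₁ * x ^ 2 + c₃) + (c₂ / 3) * s ^ 1
        + (-(2 * c₁ * a ^ 2 / b) - (2 * b ^ 2 + 9) * c₁ / 18) * s ^ 2
        + (0 : ℝ) * s ^ 3 + (c₁ / b) * s ^ 4 :=
      funext fun s => by rw [hξ]; ring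
    rw [e, dq]; ring
  have hdη : ∀ x s : ℝ, deriv (fun r => η r x) s
      = (3 * c₁ * s ^ 2 / b - c₁ * a ^ 2 / b - (2 * b ^ 2 + 9) * c₁ / 9) * x := by
    intro x s
    have e : (fun r => η r x) = fun r : ℝ =>
        (-(2 * b / 3) * c₁ * x ^ 2 + c₂ / 3 * x)
        + ((-(c₁ * a ^ 2 / b) - (2 * b ^ 2 + 9) * c₁ / 9) * x) * r ^ 1
        + (0 : ℝ) * r ^ 2 + (c₁ * x / b) * r ^ 3 + (0 : ℝ) * r ^ 4 :=
      funext fun r => by rw [hη]; ring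
    rw [e, dq]; ring
  have hddη : ∀ t x : ℝ, deriv (fun s => deriv (fun r => η r x) s) t = 6 * c₁ * t / b * x := by
    intro t x
    have e : (fun s => deriv (fun r => η r x) s) = fun s : ℝ =>
        ((-(c₁ * a ^ 2 / b) - (2 * b ^ 2 + 9) * c₁ / 9) * x) + (0 : ℝ) * s ^ 1
        + (3 * c₁ * x / b) * s ^ 2 + (0 : ℝ) * s ^ 3 + (0 : ℝ) * s ^ 4 :=
      funext fun s => by rw [hdη x s]; ring
    rw [e, dq]; ring
  have hdηx : ∀ t x : ℝ, deriv (fun y => η t y) x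
      = (c₁ * (t ^ 3 - a ^ 2 * t) / b - (2 * b ^ 2 + 9) * c₁ * t / 9 + c₂ / 3)
        - (4 * b / 3) * c₁ * x := by
    intro t x
    have e : (fun y => η t y) = fun y : ℝ =>
        (0 : ℝ)
        + (c₁ * (t ^ 3 - a ^ 2 * t) / b - (2 * b ^ 2 + 9) * c₁ * t / 9 + c₂ / 3) * y ^ 1
        + (-(2 * b / 3) * c₁) * y ^ 2 + (0 : ℝ) * y ^ 3 + (0 : ℝ) * y ^ 4 :=
      funext fun y => by rw [hη]; ring
    rw [e, dq]; ring
  -- explicit identity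
  have heq' : ∀ t x : ℝ,
      ((1 / 2) * c₁ * x ^ 2 + c₁ * t ^ 4 / b - 2 * c₁ * a ^ 2 * t ^ 2 / b
        - (2 * b ^ 2 + 9) * c₁ * t ^ 2 / 18 + c₂ * t / 3 + c₃) * (a ^ 2 - 3 * t ^ 2) * x
      + 2 * (-(2 * b / 3) * c₁ * x ^ 2
          + (c₁ * (t ^ 3 - a ^ 2 * t) / b - (2 * b ^ 2 + 9) * c₁ * t / 9 + c₂ / 3) * x)
          * (t ^ 3 - a ^ 2 * t - x)
      + (-(2 * b / 3) * c₁ * x ^ 2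
          + (c₁ * (t ^ 3 - a ^ 2 * t) / b - (2 * b ^ 2 + 9) * c₁ * t / 9 + c₂ / 3) * x) * x
      + (6 * c₁ * t / b * x) * x ^ 3
      + (((c₁ * (t ^ 3 - a ^ 2 * t) / b - (2 * b ^ 2 + 9) * c₁ * t / 9 + c₂ / 3)
            - (4 * b / 3) * c₁ * x)
          - 2 * (4 * c₁ * t ^ 3 / b - 4 * c₁ * a ^ 2 * t / b - (2 * b ^ 2 + 9) * c₁ * t / 9
            + c₂ / 3)) * (t ^ 3 - a ^ 2 * t - x) * x
      + b * ((3 * c₁ * t ^ 2 / b - c₁ * a ^ 2 / b - (2 * b ^ 2 + 9) * c₁ / 9) * x) * x ^ 2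
      = 0 := by
    intro t x
    have h := heq t x
    rw [hdξ t x, hdη x t, hddη t x, hdηx t x, hξ t x, hη t x] at h
    linear_combination h
  -- extract c₁ = 0
  have hc1 : c₁ = 0 := by
    have h1 := heq' 1 2
    have h2 := heq' 1 1
    have h3 := heq' 1 (-1)
    have h4 := heq' 1 (-2)
    have key : c₁ / b = 0 := by
      linear_combination (1/144) * h1 - (1/36) * h2 - (1/36) * h3 + (1/144) * h4
    field_simp at key
    exact key.trans (mul_zero b)
  have hc3 : c₃ = 0 := by
    have h := heq' 0 1
    rw [hc1] at h
    have h' : a ^ 2 * c₃ = 0 := by linear_combination h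
    rcases mul_eq_zero.mp h' with h'' | h''
    · exact absurd h'' (pow_ne_zero 2 ha')
    · exact h''
  have hc2 : c₂ = 0 := by
    have h := heq' 1 1
    rw [hc1, hc3] at h
    linear_combination (-3/2 : ℝ) * h
  exact hne (by rw [hc1, hc2, hc3])
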